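/- Let 0 < q < 1 and φ ∈ ℝ. For the boundary representation ω_φ on ℓ²(ℤ≥0) (ω_φ(z₁₁) = −q^{-1}e^{2iφ}S*C₄, ω_φ(z₂₁) = e^{iφ}D², ω_φ(z₂₂) = C₄S), the operator d = ω_φ(z₂₂)ω_φ(z₁₁) − q^{-1}ω_φ(z₂₁)² satisfies d* d = d d* = q^{-2}·I. -/

import Mathlib

noncomputable section
open ContinuousLinearMap Complex

/-- ℓ²(ℤ≥0) -/
abbrev H : Type := lp (fun _ : ℕ => ℂ) 2

/-- standard orthonormal basis vector e_k -/
def e (k : ℕ) : H := lp.single 2 k 1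

/-- the canonical Hilbert basis of H -/
def bH : HilbertBasis ℕ ℂ H := HilbertBasis.ofRepr (LinearIsometryEquiv.refl ℂ H)

lemma bH_eq (k : ℕ) : bH k = e k := by
  rw [← bH.repr_symm_single]
  rfl

lemma inner_e (i j : ℕ) : (inner ℂ (e i) (e j) : ℂ) = if i = j then 1 else 0 := by
  have := bH.orthonormal
  rw [orthonormal_iff_ite] at this
  simpa [bH_eq] using this i j

lemma ext_e {T T' : H →L[ℂ] H} (h : ∀ k, T (e k) = T' (e k)) : T = T' := by
  apply ContinuousLinearMap.ext_on (s := Set.range (e ·))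
  · have := bH.dense_span
    have he : Set.range (bH ·) = Set.range (e ·) := by
      ext x; simp [bH_eq]
    rw [he] at this
    exact Submodule.dense_iff_topologicalClosure_eq_top.mpr this
  · rintro x ⟨k, rfl⟩; exact h k

lemma eq_of_inner_e {x y : H} (h : ∀ k, (inner ℂ (e k) x : ℂ) = inner ℂ (e k) y) : x = y := by
  apply bH.repr.injective
  ext i
  rw [bH.repr_apply_apply, bH.repr_apply_apply, bH_eq]
  exact h i

/-- The image d = ω_φ(z₂₂)ω_φ(z₁₁) − q⁻¹ ω_φ(z₂₁)² of the q-determinant under the boundary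
representation ω_φ satisfies d* d = d d* = q⁻²·I. -/
theorem stmt19 (q : ℝ) (hq : 0 < q) (hq1 : q < 1) (φ : ℝ)
    (S C4 D : H →L[ℂ] H)
    (hS : ∀ k, S (e k) = e (k + 1))
    (hC4 : ∀ k, C4 (e k) = ((Real.sqrt (1 - q ^ (4 * k)) : ℝ) : ℂ) • e k)
    (hD : ∀ k, D (e k) = ((q ^ k : ℝ) : ℂ) • e k)
    (z11 z21 z22 : H →L[ℂ] H)
    (hz11 : z11 = (-(q⁻¹ : ℂ) * Complex.exp (2 * φ * Complex.I)) • (adjoint S * C4))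
    (hz21 : z21 = Complex.exp (φ * Complex.I) • (D * D))
    (hz22 : z22 = C4 * S)
    (d : H →L[ℂ] H) (hd : d = z22 * z11 - (q⁻¹ : ℂ) • (z21 * z21)) :
    adjoint d * d = ((q⁻¹ : ℂ) ^ 2) • (1 : H →L[ℂ] H)
    ∧ d * adjoint d = ((q⁻¹ : ℂ) ^ 2) • (1 : H →L[ℂ] H) := by
  set lam : ℂ := -(q⁻¹ : ℂ) * Complex.exp (2 * φ * Complex.I) with hlam
  -- adjoint S on basis vectors
  have hSadj : ∀ k, adjoint S (e k) = if k = 0 then 0 else e (k - 1) := by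
    intro k
    apply eq_of_inner_e
    intro i
    rw [ContinuousLinearMap.adjoint_inner_right, hS, inner_e]
    cases k with
    | zero => simp [inner_e]
    | succ n =>
      simp only [Nat.succ_ne_zero, if_false, Nat.succ_sub_one, inner_e]
      simp [Nat.add_right_cancel_iff]
  -- d on basis vectors
  have hde : ∀ k, d (e k) = lam • e k := by
    intro k
    have h4k : (0:ℝ) ≤ 1 - q ^ (4 * k) := by
      have : q ^ (4 * k) ≤ 1 := pow_le_one₀ hq.le hq1.le
      linarith
    have hsq : ((Real.sqrt (1 - q ^ (4 * k)) : ℝ) : ℂ) *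
        ((Real.sqrt (1 - q ^ (4 * k)) : ℝ) : ℂ) = ((1 - q ^ (4 * k) : ℝ) : ℂ) := by
      rw [← Complex.ofReal_mul, Real.mul_self_sqrt h4k]
    have hz21sq : z21 (z21 (e k)) =
        (Complex.exp (φ * Complex.I) * Complex.exp (φ * Complex.I)
          * ((q ^ (4 * k) : ℝ) : ℂ)) • e k := by
      rw [hz21]
      simp only [ContinuousLinearMap.smul_apply, ContinuousLinearMap.mul_apply, hD, map_smul]
      simp only [smul_smul]
      congr 1
      push_cast
      ring_nf
    have hz11e : z22 (z11 (e k)) = (lam * ((1 - q ^ (4 * k) : ℝ) : ℂ)) • e k := by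
      rw [hz11, hz22]
      simp only [ContinuousLinearMap.smul_apply, ContinuousLinearMap.mul_apply, hC4, map_smul]
      rw [hSadj]
      cases k with
      | zero =>
        simp [hlam]
      | succ n =>
        simp only [Nat.succ_ne_zero, if_false, Nat.succ_sub_one, map_smul, hS, hC4]
        rw [smul_smul, smul_smul, hlam]
        congr 1
        rw [← hsq]
        ring
    rw [hd]
    simp only [ContinuousLinearMap.sub_apply, ContinuousLinearMap.smul_apply,
      ContinuousLinearMap.mul_apply, hz11e, hz21sq]
    rw [smul_smul, ← sub_smul]
    congr 1
    rw [hlam, ← Complex.exp_add]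
    have : (φ : ℂ) * Complex.I + φ * Complex.I = 2 * φ * Complex.I := by ring
    rw [this]
    push_cast
    ring
  have hdeq : d = lam • (1 : H →L[ℂ] H) := by
    apply ext_e
    intro k
    simp [hde k]
  have hadj : adjoint d = (starRingEnd ℂ lam) • (1 : H →L[ℂ] H) := by
    rw [hdeq, ← ContinuousLinearMap.star_eq_adjoint, star_smul, star_one]
    rfl
  have hnorm : (starRingEnd ℂ lam) * lam = (q⁻¹ : ℂ) ^ 2 := by
    rw [hlam]
    rw [map_mul, map_neg, map_inv₀]
    rw [Complex.conj_ofReal]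
    rw [← Complex.exp_conj]
    have hc : (starRingEnd ℂ) (2 * φ * Complex.I) = -(2 * φ * Complex.I) := by
      rw [map_mul, map_mul, Complex.conj_I, Complex.conj_ofReal]
      rw [show (starRingEnd ℂ) 2 = 2 from map_ofNat _ 2]
      ring
    rw [hc]
    have : Complex.exp (-(2 * φ * Complex.I)) * Complex.exp (2 * φ * Complex.I) = 1 := by
      rw [← Complex.exp_add]; simp
    calc -(↑q)⁻¹ * Complex.exp (-(2 * ↑φ * Complex.I)) * (-(↑q)⁻¹ * Complex.exp (2 * ↑φ * Complex.I))
        = (↑q)⁻¹ ^ 2 * (Complex.exp (-(2 * ↑φ * Complex.I)) * Complex.exp (2 * ↑φ * Complex.I)) := by ring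
      _ = (↑q)⁻¹ ^ 2 := by rw [this, mul_one]
  constructor
  · rw [hadj, hdeq]
    rw [smul_mul_smul_comm, one_mul, hnorm]
  · rw [hadj, hdeq]
    rw [smul_mul_smul_comm, one_mul, mul_comm, hnorm]
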